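/- Fix N ≥ 1 and M > 0. Let V_N be the set of real numbers of the form Σ_{n=1}^N Σ_{s∈S} R_s (x_{n,s}⁰ + x_{n,s}¹) over all tuples (x_1, …, x_N) of points of Q satisfying Σ_{n=1}^N Σ_{s∈S} x_{n,s}¹ = M/(1−β), and let V₁ be the set of real numbers of the form Σ_{s∈S} R_s (x_s⁰ + x_s¹) over all (x⁰, x¹) ∈ Q satisfying Σ_{s∈S} x_s¹ = M/(N(1−β)). Then V_N = { N·v : v ∈ V₁ }. In particular, the optimal value of the N-user homogeneous restless-bandit linear program equals N times the optimal value of the single-user reduced linear program. -/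

import Mathlib

/-- Membership in the restless-bandit polytope `Q`: both performance-measure
vectors are nonnegative and the balance equations hold. -/
def inPolytope {S : Type*} [Fintype S] (β : ℝ) (H0 H1 : Matrix S S ℝ)
    (α : S → ℝ) (x0 x1 : S → ℝ) : Prop :=
  (∀ s, 0 ≤ x0 s) ∧ (∀ s, 0 ≤ x1 s) ∧
  ∀ j, x0 j + x1 j = α j + β * ∑ i, (H0 i j * x0 i + H1 i j * x1 i)

/-- The set of objective values of the `N`-user homogeneous restless-bandit LP
equals `N` times the set of objective values of the single-user reduced LP. -/
theorem multiuser_values_eq_scaled_single_user {S : Type*} [Fintype S]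
    (β : ℝ) (hβ0 : 0 < β) (hβ1 : β < 1)
    (H0 H1 : Matrix S S ℝ)
    (hH0 : ∀ i j, 0 ≤ H0 i j) (hH1 : ∀ i j, 0 ≤ H1 i j)
    (α : S → ℝ) (hα : ∀ s, 0 ≤ α s)
    (R : S → ℝ)
    (N : ℕ) (hN : 1 ≤ N) (M : ℝ) (hM : 0 < M) :
    {v : ℝ | ∃ x0 x1 : Fin N → S → ℝ,
        (∀ n, inPolytope β H0 H1 α (x0 n) (x1 n)) ∧
        (∑ n, ∑ s, x1 n s = M / (1 - β)) ∧
        v = ∑ n, ∑ s, R s * (x0 n s + x1 n s)}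
      = (fun v : ℝ => (N : ℝ) * v) ''
        {v : ℝ | ∃ x0 x1 : S → ℝ,
          inPolytope β H0 H1 α x0 x1 ∧
          (∑ s, x1 s = M / ((N : ℝ) * (1 - β))) ∧
          v = ∑ s, R s * (x0 s + x1 s)} := by
  have hNpos : (0:ℝ) < (N:ℝ) := by exact_mod_cast hN
  have hNne : (N:ℝ) ≠ 0 := ne_of_gt hNpos
  ext v
  simp only [Set.mem_setOf_eq, Set.mem_image]
  constructor
  · rintro ⟨x0, x1, hQ, hsum, rfl⟩
    refine ⟨(∑ n, ∑ s, R s * (x0 n s + x1 n s)) / N,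
      ⟨fun s => (∑ n, x0 n s) / N, fun s => (∑ n, x1 n s) / N,
        ⟨?_, ?_, ?_⟩, ?_, ?_⟩, ?_⟩
    · intro s
      exact div_nonneg (Finset.sum_nonneg fun n _ => (hQ n).1 s) hNpos.le
    · intro s
      exact div_nonneg (Finset.sum_nonneg fun n _ => (hQ n).2.1 s) hNpos.le
    · intro j
      have key : ∑ n, (x0 n j + x1 n j)
          = (N:ℝ) * α j + β * ∑ i, (H0 i j * ∑ n, x0 n i + H1 i j * ∑ n, x1 n i) := by
        calc ∑ n, (x0 n j + x1 n j)
            = ∑ n : Fin N, (α j + β * ∑ i, (H0 i j * x0 n i + H1 i j * x1 n i)) := by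
              exact Finset.sum_congr rfl fun n _ => (hQ n).2.2 j
          _ = (N:ℝ) * α j + β * ∑ i, (H0 i j * ∑ n, x0 n i + H1 i j * ∑ n, x1 n i) := by
              rw [Finset.sum_add_distrib, Finset.sum_const, Finset.card_fin, nsmul_eq_mul,
                ← Finset.mul_sum, Finset.sum_comm]
              congr 2
              refine Finset.sum_congr rfl fun i _ => ?_
              rw [Finset.sum_add_distrib, Finset.mul_sum, Finset.mul_sum]
      have hsplit : ∑ n, (x0 n j + x1 n j) = (∑ n, x0 n j) + ∑ n, x1 n j :=
        Finset.sum_add_distrib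
      rw [← add_div, ← hsplit, key]
      rw [add_div, mul_div_assoc, mul_div_assoc (β), Finset.sum_div]
      congr 1
      · field_simp
      · congr 1
        refine Finset.sum_congr rfl fun i _ => ?_
        rw [add_div, mul_div_assoc, mul_div_assoc]
    · rw [← Finset.sum_div, Finset.sum_comm, hsum, div_div, mul_comm]
    · simp only [Finset.sum_div]
      rw [Finset.sum_comm]
      refine Finset.sum_congr rfl fun s _ => ?_
      rw [← Finset.sum_add_distrib, Finset.mul_sum]
      exact Finset.sum_congr rfl fun n _ => by ring
    · rw [mul_div_cancel₀ _ hNne]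
  · rintro ⟨v', ⟨x0, x1, hQ, hsum, rfl⟩, rfl⟩
    refine ⟨fun _ => x0, fun _ => x1, fun _ => hQ, ?_, ?_⟩
    · rw [Finset.sum_const, Finset.card_fin, nsmul_eq_mul, hsum, mul_comm (N:ℝ) (1-β),
        ← div_div, mul_div_cancel₀ _ hNne]
    · rw [Finset.sum_const, Finset.card_fin, nsmul_eq_mul]
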